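/- Let $p = (p_1,\ldots,p_N)$ be a probability distribution with $p_1 < p_2$, let $0 < h \le (p_2-p_1)/2$, and let $p' = (p_1+h, p_2-h, p_3,\ldots,p_N)$ (a Robin Hood transfer). Then for every $n \ge 1$ and every $1 \le k \le N-1$, $P_p(Y_n \le k) \ge P_{p'}(Y_n \le k)$, where $Y_n$ is the number of distinct values in $n$ i.i.d. draws from the respective distribution. -/

import Mathlib

open Finset

/-- The probability of an event `E` for `n` i.i.d. draws from the distribution `p`
on `{1, …, N}`: the sum of the product weights of the outcome sequences in `E`. -/
noncomputable def prob {N : ℕ} (p : Fin N → ℝ) {n : ℕ} (E : Set (Fin n → Fin N)) : ℝ :=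
  ∑ ω : Fin n → Fin N, Set.indicator E (fun ω => ∏ i, p (ω i)) ω

/-- The number of distinct values drawn, `Y_n`. -/
noncomputable def distinctCount {N n : ℕ} (ω : Fin n → Fin N) : ℕ :=
  (Finset.univ.image ω).card

private lemma pow_aux {x y h : ℝ} (hx : 0 ≤ x) (hh : 0 ≤ h) (hxy : x + h ≤ y - h) (m : ℕ) :
    (x + h) ^ m + (y - h) ^ m ≤ x ^ m + y ^ m := by
  have h1 : x + h ≤ y := by linarith
  have h2 : (0:ℝ) ≤ y - h := by linarith
  have e1 := geom_sum₂_mul (x + h) x m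
  have e2 := geom_sum₂_mul y (y - h) m
  have hxh : x + h - x = h := by ring
  have hyh : y - (y - h) = h := by ring
  rw [hxh] at e1
  rw [hyh] at e2
  have hs : (∑ i ∈ Finset.range m, (x + h) ^ i * x ^ (m - 1 - i))
      ≤ ∑ i ∈ Finset.range m, y ^ i * (y - h) ^ (m - 1 - i) := by
    apply Finset.sum_le_sum
    intro i _
    exact mul_le_mul (pow_le_pow_left₀ (by linarith) h1 i)
      (pow_le_pow_left₀ hx (by linarith) _) (pow_nonneg hx _) (pow_nonneg (by linarith) _)
  have := mul_le_mul_of_nonneg_right hs hh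
  linarith

private lemma key (N n k : ℕ) (p q : Fin N → ℝ) (e0 e1 : Fin N) (hne : e0 ≠ e1)
    (hp : ∀ v, 0 ≤ p v)
    (hagree : ∀ v, v ≠ e0 → v ≠ e1 → q v = p v)
    (hsum : q e0 + q e1 = p e0 + p e1)
    (h01 : p e0 ≤ q e0) (hq01 : q e0 ≤ q e1) :
    prob q {ω : Fin n → Fin N | distinctCount ω ≤ k}
      ≤ prob p {ω : Fin n → Fin N | distinctCount ω ≤ k} := by
  classical
  have probeq : ∀ r : Fin N → ℝ,
      prob r {ω : Fin n → Fin N | distinctCount ω ≤ k}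
        = ∑ ω : Fin n → Fin N, (if distinctCount ω ≤ k then ∏ i, r (ω i) else 0) := by
    intro r
    unfold prob
    refine Finset.sum_congr rfl fun ω _ => ?_
    by_cases hω : distinctCount ω ≤ k
    · rw [Set.indicator_of_mem (by exact hω), if_pos hω]
    · rw [Set.indicator_of_notMem (by exact hω), if_neg hω]
  rw [probeq p, probeq q]
  set Φ : Fin N → Fin N := fun v => if v = e1 then e0 else v with hΦdef
  rw [← Finset.sum_fiberwise Finset.univ (fun ω : Fin n → Fin N => Φ ∘ ω)
      (fun ω => if distinctCount ω ≤ k then ∏ i, q (ω i) else 0)]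
  rw [← Finset.sum_fiberwise Finset.univ (fun ω : Fin n → Fin N => Φ ∘ ω)
      (fun ω => if distinctCount ω ≤ k then ∏ i, p (ω i) else 0)]
  apply Finset.sum_le_sum
  intro τ _
  by_cases hτ1 : ∃ i, τ i = e1
  · have hempty : (Finset.univ.filter (fun ω : Fin n → Fin N => Φ ∘ ω = τ)) = ∅ := by
      obtain ⟨i, hi⟩ := hτ1
      ext ω
      simp only [Finset.mem_filter, Finset.mem_univ, true_and, Finset.notMem_empty, iff_false]
      intro hωτ
      have h2 : Φ (ω i) = e1 := by
        rw [show Φ (ω i) = (Φ ∘ ω) i from rfl, hωτ, hi]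
      simp only [hΦdef] at h2
      split_ifs at h2 with hc
      · exact hne h2
      · exact hc h2
    simp only [hempty, Finset.sum_empty, le_refl]
  push_neg at hτ1
  set A : Finset (Fin n) := Finset.univ.filter (fun i => τ i = e0) with hAdef
  have hmemA : ∀ i, i ∈ A ↔ τ i = e0 := by
    intro i; simp [hAdef]
  set R : ℝ := ∏ i ∈ Finset.univ.filter (fun i => τ i ≠ e0), p (τ i) with hRdef
  have hR0 : 0 ≤ R := Finset.prod_nonneg fun i _ => hp _
  set G : Finset (Fin n) → (Fin n → Fin N) := fun T => fun i => if i ∈ T then e1 else τ i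
    with hGdef
  have hleft : ∀ ω ∈ Finset.univ.filter (fun ω : Fin n → Fin N => Φ ∘ ω = τ),
      G (Finset.univ.filter (fun i => ω i = e1)) = ω := by
    intro ω hω
    simp only [Finset.mem_filter, Finset.mem_univ, true_and] at hω
    funext i
    simp only [hGdef, Finset.mem_filter, Finset.mem_univ, true_and]
    by_cases hi : ω i = e1
    · simp [hi]
    · have h3 := congrFun hω i
      simp only [Function.comp_apply, hΦdef] at h3
      rw [if_neg hi] at h3
      simp [hi, h3, hτ1 i]
  have reindex : ∀ f : (Fin n → Fin N) → ℝ,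
      ∑ ω ∈ Finset.univ.filter (fun ω : Fin n → Fin N => Φ ∘ ω = τ), f ω
        = ∑ T ∈ A.powerset, f (G T) := by
    intro f
    apply Finset.sum_nbij' (fun ω => Finset.univ.filter (fun i => ω i = e1)) G
    · intro ω hω
      simp only [Finset.mem_filter, Finset.mem_univ, true_and] at hω
      simp only [Finset.mem_powerset]
      intro i hi
      simp only [Finset.mem_filter, Finset.mem_univ, true_and] at hi
      refine (hmemA i).mpr ?_
      have h3 := congrFun hω i
      simp [hΦdef, hi] at h3
      exact h3.symm
    · intro T hT
      simp only [Finset.mem_powerset] at hT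
      simp only [Finset.mem_filter, Finset.mem_univ, true_and]
      funext i
      simp only [Function.comp_apply, hGdef]
      by_cases hi : i ∈ T
      · have hτi : τ i = e0 := (hmemA i).mp (hT hi)
        simp [hi, hΦdef, hτi]
      · simp [hi, hΦdef, hτ1 i]
    · exact hleft
    · intro T hT
      simp only [Finset.mem_powerset] at hT
      ext i
      simp only [Finset.mem_filter, Finset.mem_univ, true_and, hGdef]
      by_cases hi : i ∈ T
      · simp [hi]
      · simp [hi, hτ1 i]
    · intro ω hω
      rw [hleft ω hω]
  rw [reindex, reindex]
  -- weight computation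
  have weight : ∀ r : Fin N → ℝ, (∀ v, v ≠ e0 → v ≠ e1 → r v = p v) → ∀ T ∈ A.powerset,
      (∏ i, r (G T i)) = r e1 ^ T.card * r e0 ^ (A \ T).card * R := by
    intro r hr T hT
    have hTA : T ⊆ A := Finset.mem_powerset.mp hT
    have h1 : (∏ i, r (G T i)) = ∏ i, (if i ∈ T then r e1 else r (τ i)) := by
      refine Finset.prod_congr rfl fun i _ => ?_
      simp only [hGdef]
      split_ifs <;> rfl
    rw [h1, Finset.prod_ite]
    have h2 : Finset.univ.filter (fun i => i ∈ T) = T := by ext i; simp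
    have h3 : Finset.univ.filter (fun i => ¬ i ∈ T)
        = (A \ T) ∪ Finset.univ.filter (fun i => τ i ≠ e0) := by
      ext i
      simp only [Finset.mem_filter, Finset.mem_univ, true_and, Finset.mem_union,
        Finset.mem_sdiff, hmemA]
      constructor
      · intro hi
        by_cases hτi : τ i = e0
        · exact Or.inl ⟨hτi, hi⟩
        · exact Or.inr hτi
      · rintro (⟨_, hi⟩ | hi)
        · exact hi
        · intro hiT
          exact hi ((hmemA i).mp (hTA hiT))
    have hdisj : Disjoint (A \ T) (Finset.univ.filter (fun i => τ i ≠ e0)) := by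
      rw [Finset.disjoint_left]
      intro i hi1 hi2
      simp only [Finset.mem_sdiff] at hi1
      simp only [Finset.mem_filter, Finset.mem_univ, true_and] at hi2
      exact hi2 ((hmemA i).mp hi1.1)
    rw [h3, Finset.prod_union hdisj, Finset.prod_const]
    have h4 : (∏ i ∈ A \ T, r (τ i)) = r e0 ^ (A \ T).card := by
      rw [← Finset.prod_const]
      refine Finset.prod_congr rfl fun i hi => ?_
      rw [(hmemA i).mp (Finset.mem_sdiff.mp hi).1]
    have h5 : (∏ i ∈ Finset.univ.filter (fun i => τ i ≠ e0), r (τ i)) = R := by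
      rw [hRdef]
      refine Finset.prod_congr rfl fun i hi => ?_
      simp only [Finset.mem_filter, Finset.mem_univ, true_and] at hi
      exact hr (τ i) hi (hτ1 i)
    rw [h2, h4, h5]
    ring
  -- distinct count computations
  set B1 : Finset (Fin N) := (Finset.univ.image τ).erase e0 with hB1def
  set d : ℕ := B1.card with hddef
  have hB1e1 : e1 ∉ B1 := by
    intro hc
    have := Finset.mem_of_mem_erase hc
    obtain ⟨i, _, hi⟩ := Finset.mem_image.mp this
    exact hτ1 i hi
  have hB1e0 : e0 ∉ B1 := Finset.notMem_erase _ _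
  have hB1sub : ∀ T ∈ A.powerset, B1 ⊆ Finset.univ.image (G T) := by
    intro T hT v hv
    have hTA := Finset.mem_powerset.mp hT
    obtain ⟨hv0, hvim⟩ := Finset.mem_erase.mp hv
    obtain ⟨i, _, hi⟩ := Finset.mem_image.mp hvim
    refine Finset.mem_image.mpr ⟨i, Finset.mem_univ i, ?_⟩
    have hiT : i ∉ T := by
      intro hc
      exact hv0 (hi.symm.trans ((hmemA i).mp (hTA hc)))
    simp only [hGdef]
    rw [if_neg hiT]
    exact hi
  have himgsub : ∀ T ∈ A.powerset,
      Finset.univ.image (G T) ⊆ insert e0 (insert e1 B1) := by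
    intro T hT v hv
    obtain ⟨i, _, hi⟩ := Finset.mem_image.mp hv
    simp only [hGdef] at hi
    by_cases hiT : i ∈ T
    · rw [if_pos hiT] at hi
      simp [← hi]
    · rw [if_neg hiT] at hi
      by_cases hτi : τ i = e0
      · simp [← hi, hτi]
      · have : v ∈ B1 := Finset.mem_erase.mpr ⟨hi ▸ hτi, Finset.mem_image.mpr ⟨i, Finset.mem_univ i, hi⟩⟩
        simp [this]
  by_cases hA : A = ∅
  · -- fiber is a single point, both terms are equal
    have hmemE : (∅ : Finset (Fin n)) ∈ A.powerset := Finset.empty_mem_powerset A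
    have h1 := weight q hagree ∅ hmemE
    have h2 := weight p (fun v _ _ => rfl) ∅ hmemE
    rw [hA] at *
    simp only [Finset.sdiff_empty, Finset.card_empty, pow_zero, one_mul] at h1 h2
    rw [Finset.powerset_empty, Finset.sum_singleton, Finset.sum_singleton, h1, h2]
  have hAne : A.Nonempty := Finset.nonempty_of_ne_empty hA
  have he0img : e0 ∈ Finset.univ.image τ := by
    obtain ⟨i, hi⟩ := hAne
    exact Finset.mem_image.mpr ⟨i, Finset.mem_univ i, (hmemA i).mp hi⟩
  have himgτ : Finset.univ.image τ = insert e0 B1 := (Finset.insert_erase he0img).symm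
  have hGE : G ∅ = τ := by funext i; simp [hGdef]
  have hdE : distinctCount (G ∅) = d + 1 := by
    rw [hGE]
    show (Finset.univ.image τ).card = d + 1
    rw [himgτ, Finset.card_insert_of_notMem hB1e0]
  have hdA : distinctCount (G A) = d + 1 := by
    have himg : Finset.univ.image (G A) = insert e1 B1 := by
      ext v
      simp only [Finset.mem_image, Finset.mem_univ, true_and, Finset.mem_insert]
      constructor
      · rintro ⟨i, hi⟩
        simp only [hGdef] at hi
        by_cases hiA : i ∈ A
        · rw [if_pos hiA] at hi; exact Or.inl hi.symm
        · rw [if_neg hiA] at hi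
          refine Or.inr (Finset.mem_erase.mpr ⟨?_, Finset.mem_image.mpr ⟨i, Finset.mem_univ i, hi⟩⟩)
          rw [← hi]
          intro hc
          exact hiA ((hmemA i).mpr hc)
      · rintro (hv | hv)
        · obtain ⟨i, hi⟩ := hAne
          exact ⟨i, by simp [hGdef, hi, hv.symm]⟩
        · obtain ⟨hv0, hvim⟩ := Finset.mem_erase.mp hv
          obtain ⟨i, _, hi⟩ := Finset.mem_image.mp hvim
          have hiA : i ∉ A := fun hc => hv0 (by rw [← hi, (hmemA i).mp hc])
          exact ⟨i, by simp [hGdef, hiA, hi]⟩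
    show (Finset.univ.image (G A)).card = d + 1
    rw [himg, Finset.card_insert_of_notMem hB1e1]
  have hdmid : ∀ T ∈ A.powerset, T ≠ ∅ → T ≠ A → d + 2 ≤ distinctCount (G T) := by
    intro T hT hTE hTA'
    have hTA := Finset.mem_powerset.mp hT
    have hsub2 : insert e0 (insert e1 B1) ⊆ Finset.univ.image (G T) := by
      intro v hv
      rcases Finset.mem_insert.mp hv with hv | hv
      · obtain ⟨i, hiA, hiT⟩ := Finset.exists_of_ssubset (hTA.ssubset_of_ne hTA')
        refine Finset.mem_image.mpr ⟨i, Finset.mem_univ i, ?_⟩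
        simp only [hGdef]
        rw [if_neg hiT, (hmemA i).mp hiA, hv]
      · rcases Finset.mem_insert.mp hv with hv | hv
        · obtain ⟨i, hi⟩ := Finset.nonempty_of_ne_empty hTE
          refine Finset.mem_image.mpr ⟨i, Finset.mem_univ i, ?_⟩
          simp only [hGdef]
          rw [if_pos hi, hv]
        · exact hB1sub T hT hv
    have hcard : (insert e0 (insert e1 B1)).card = d + 2 := by
      rw [Finset.card_insert_of_notMem, Finset.card_insert_of_notMem hB1e1]
      simp only [Finset.mem_insert]
      push_neg
      exact ⟨hne, hB1e0⟩
    calc d + 2 = (insert e0 (insert e1 B1)).card := hcard.symm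
      _ ≤ (Finset.univ.image (G T)).card := Finset.card_le_card hsub2
      _ = distinctCount (G T) := rfl
  have hub : ∀ T ∈ A.powerset, distinctCount (G T) ≤ d + 2 := by
    intro T hT
    calc distinctCount (G T) = (Finset.univ.image (G T)).card := rfl
      _ ≤ (insert e0 (insert e1 B1)).card := Finset.card_le_card (himgsub T hT)
      _ ≤ (insert e1 B1).card + 1 := Finset.card_insert_le _ _
      _ ≤ d + 2 := by
          have := Finset.card_insert_le e1 B1
          omega
  rcases Nat.lt_or_ge k (d + 1) with hk | hk
  · -- k ≤ d : all terms vanish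
    have hz : ∀ (r : Fin N → ℝ), ∀ T ∈ A.powerset,
        (if distinctCount (G T) ≤ k then ∏ i, r (G T i) else 0) = 0 := by
      intro r T hT
      have hlow : d + 1 ≤ distinctCount (G T) := by
        by_cases h1 : T = ∅
        · rw [h1, hdE]
        · by_cases h2 : T = A
          · rw [h2, hdA]
          · have := hdmid T hT h1 h2; omega
      rw [if_neg (by omega)]
    rw [Finset.sum_eq_zero (hz q), Finset.sum_eq_zero (hz p)]
  rcases Nat.lt_or_ge k (d + 2) with hk2 | hk2
  · -- k = d + 1 : only T = ∅ and T = A contribute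
    have hkd : k = d + 1 := by omega
    have hAEne : (∅ : Finset (Fin n)) ≠ A := fun hc => hA hc.symm
    have hpairsub : ({∅, A} : Finset (Finset (Fin n))) ⊆ A.powerset := by
      intro T hT
      rcases Finset.mem_insert.mp hT with hT | hT
      · rw [hT]; exact Finset.empty_mem_powerset A
      · rw [Finset.mem_singleton.mp hT]; exact Finset.mem_powerset_self A
    have hsum_eq : ∀ r : Fin N → ℝ, (∀ v, v ≠ e0 → v ≠ e1 → r v = p v) →
        ∑ T ∈ A.powerset, (if distinctCount (G T) ≤ k then ∏ i, r (G T i) else 0)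
          = r e0 ^ A.card * R + r e1 ^ A.card * R := by
      intro r hr
      rw [← Finset.sum_subset hpairsub]
      · rw [Finset.sum_pair hAEne]
        rw [if_pos (by rw [hdE]; omega), if_pos (by rw [hdA]; omega),
          weight r hr ∅ (Finset.empty_mem_powerset A),
          weight r hr A (Finset.mem_powerset_self A)]
        simp only [Finset.card_empty, pow_zero, one_mul, Finset.sdiff_empty,
          Finset.sdiff_self, Finset.card_empty]
        ring
      · intro T hT hT2
        simp only [Finset.mem_insert, Finset.mem_singleton] at hT2
        push_neg at hT2
        have := hdmid T hT (Finset.nonempty_iff_ne_empty.mp hT2.1) hT2.2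
        rw [if_neg (by omega)]
    rw [hsum_eq q hagree, hsum_eq p (fun v _ _ => rfl)]
    have hq0 : q e0 = p e0 + (q e0 - p e0) := by ring
    have hq1 : q e1 = p e1 - (q e0 - p e0) := by linarith
    have hineq := pow_aux (x := p e0) (y := p e1) (h := q e0 - p e0) (hp e0)
      (by linarith) (by linarith) A.card
    rw [hq0, hq1]
    nlinarith [mul_le_mul_of_nonneg_right hineq hR0]
  · -- k ≥ d + 2 : all indicators are 1, sums are equal
    have hall : ∀ r : Fin N → ℝ, (∀ v, v ≠ e0 → v ≠ e1 → r v = p v) →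
        ∑ T ∈ A.powerset, (if distinctCount (G T) ≤ k then ∏ i, r (G T i) else 0)
          = (r e1 + r e0) ^ A.card * R := by
      intro r hr
      have hterm : ∀ T ∈ A.powerset,
          (if distinctCount (G T) ≤ k then ∏ i, r (G T i) else 0)
            = r e1 ^ T.card * r e0 ^ (A \ T).card * R := by
        intro T hT
        rw [if_pos (le_trans (hub T hT) hk2), weight r hr T hT]
      rw [Finset.sum_congr rfl hterm, ← Finset.sum_mul]
      congr 1
      have hb := Finset.prod_add (fun _ : Fin n => r e1) (fun _ : Fin n => r e0) A
      simp only [Finset.prod_const] at hb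
      rw [hb]
    rw [hall q hagree, hall p (fun v _ _ => rfl)]
    have : q e1 + q e0 = p e1 + p e0 := by linarith
    rw [this]

/-- Theorem 6.1 (weak form): a Robin Hood transfer of mass `h` from `p_2` to `p_1`
(where `p_1 < p_2`, `0 < h ≤ (p_2 - p_1)/2`) decreases `P(Y_n ≤ k)`:
`P_p(Y_n ≤ k) ≥ P_{p'}(Y_n ≤ k)` for all `n ≥ 1` and `1 ≤ k ≤ N - 1`. -/
theorem stmt_17 (N : ℕ) (hN : 2 ≤ N) (p : Fin N → ℝ) (hp : ∀ i, 0 ≤ p i)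
    (hsum : ∑ i, p i = 1) (h : ℝ)
    (hlt : p ⟨0, by omega⟩ < p ⟨1, by omega⟩) (hh0 : 0 < h)
    (hh : h ≤ (p ⟨1, by omega⟩ - p ⟨0, by omega⟩) / 2)
    (n k : ℕ) (hn : 1 ≤ n) (hk1 : 1 ≤ k) (hkN : k ≤ N - 1) :
    prob (fun i : Fin N => if (i : ℕ) = 0 then p i + h else if (i : ℕ) = 1 then p i - h else p i)
        {ω : Fin n → Fin N | distinctCount ω ≤ k}
      ≤ prob p {ω : Fin n → Fin N | distinctCount ω ≤ k} := by
  have h0N : 0 < N := by omega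
  have h1N : 1 < N := by omega
  set e0 : Fin N := ⟨0, h0N⟩ with he0
  set e1 : Fin N := ⟨1, h1N⟩ with he1
  set q : Fin N → ℝ :=
    fun i : Fin N => if (i : ℕ) = 0 then p i + h else if (i : ℕ) = 1 then p i - h else p i
    with hqdef
  have hlt' : p e0 < p e1 := hlt
  have hh' : h ≤ (p e1 - p e0) / 2 := hh
  have hq0 : q e0 = p e0 + h := by simp [hqdef, he0, he1]
  have hq1 : q e1 = p e1 - h := by simp [hqdef, he0, he1]
  have hne : e0 ≠ e1 := by
    intro hc
    have := congrArg Fin.val hc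
    simp [he0, he1] at this
  apply key N n k p q e0 e1 hne hp
  · intro v hv0 hv1
    have h0 : (v : ℕ) ≠ 0 := fun hc => hv0 (Fin.ext hc)
    have h1 : (v : ℕ) ≠ 1 := fun hc => hv1 (Fin.ext hc)
    simp [hqdef, h0, h1]
  · rw [hq0, hq1]; ring
  · rw [hq0]; linarith
  · rw [hq0, hq1]; linarith
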